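/- Let n ≥ 4. Suppose there exists a weighted spherical t-design of generalized corner-vector type on S^{n-1} given by data (a_i, s_i, W_i), i = 1,...,k, such that s_i ≥ 3 for at least one index i. Then t ≤ 15. -/

import Mathlib

open MeasureTheory

/-- The generalized corner vector `v_{a,s} = (a^2+s)^{-1/2} (a,1,...,1,0,...,0)`
(with `s` ones after the first coordinate `a`) in `ℝ^n`. -/
noncomputable def cornerVec (n : ℕ) (a : ℝ) (s : ℕ) : EuclideanSpace ℝ (Fin n) :=
  WithLp.toLp 2 (fun i => (Real.sqrt (a ^ 2 + s))⁻¹ *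
    (if (i : ℕ) = 0 then a else if (i : ℕ) ≤ s then 1 else 0))

/-- The orbit `v_{a,s}^{B_n}` of the generalized corner vector under the
hyperoctahedral group (coordinate permutations and sign changes). -/
noncomputable def cornerOrbit (n : ℕ) (a : ℝ) (s : ℕ) : Finset (EuclideanSpace ℝ (Fin n)) :=
  @Finset.image _ _ (Classical.decEq _)
    (fun p : Equiv.Perm (Fin n) × (Fin n → Bool) =>
      (WithLp.toLp 2 (fun i => (if p.2 i then (-1 : ℝ) else 1) * cornerVec n a s (p.1 i)) :
        EuclideanSpace ℝ (Fin n)))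
    Finset.univ

/-- The average `(1/|S^{n-1}|) ∫_{S^{n-1}} f dρ` of a polynomial over the unit sphere,
with respect to the surface ((n-1)-dimensional Hausdorff) measure. -/
noncomputable def sphereAvg (n : ℕ) (f : MvPolynomial (Fin n) ℝ) : ℝ :=
  ⨍ x in Metric.sphere (0 : EuclideanSpace ℝ (Fin n)) 1,
    MvPolynomial.eval (fun i => x i) f ∂ μH[(n : ℝ) - 1]

/-- The sum `Σ_{x ∈ v_{a,s}^{B_n}} f(x)`. -/
noncomputable def orbitSum (n : ℕ) (a : ℝ) (s : ℕ) (f : MvPolynomial (Fin n) ℝ) : ℝ :=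
  ∑ y ∈ cornerOrbit n a s, MvPolynomial.eval (fun i => y i) f

/-- A weighted spherical `t`-design of generalized corner-vector type on `S^{n-1}`:
the spherical average of every polynomial of total degree at most `t` equals the
weighted sum over the orbits `v_{a_i,s_i}^{B_n}` with weights `W_i`. -/
def isDesign (n t k : ℕ) (a : Fin k → ℝ) (s : Fin k → ℕ) (W : Fin k → ℝ) : Prop :=
  ∀ f : MvPolynomial (Fin n) ℝ, f.totalDegree ≤ t →
    sphereAvg n f = ∑ i, W i * orbitSum n (a i) (s i) f

/-! ### Auxiliary material for the proof -/

open scoped ENNReal NNReal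

/- The magic polynomial of degree 16: a sum, over quadruples `(i,j,k,l)` with
`{i,j} ∩ {k,l} = ∅`, of the nonnegative terms
`(x_i x_j x_k x_l)^2 (x_i^2-x_j^2)^2 (x_k^2-x_l^2)^2`.  It vanishes at every point of
every `B_n`-orbit of a generalized corner vector, because the squared coordinates of
such a point take at most one value besides `0` and the common value `1/(a^2+s)`. -/
open MvPolynomial in
noncomputable def PP (n : ℕ) : MvPolynomial (Fin n) ℝ :=
  ∑ q : Fin n × Fin n × Fin n × Fin n,
    if q.1 ≠ q.2.2.1 ∧ q.1 ≠ q.2.2.2 ∧ q.2.1 ≠ q.2.2.1 ∧ q.2.1 ≠ q.2.2.2 then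
      (X q.1 * X q.2.1 * X q.2.2.1 * X q.2.2.2) ^ 2 *
        (X q.1 ^ 2 - X q.2.1 ^ 2) ^ 2 * (X q.2.2.1 ^ 2 - X q.2.2.2 ^ 2) ^ 2
    else 0

lemma PP_deg (n : ℕ) : (PP n).totalDegree ≤ 16 := by
  apply MvPolynomial.totalDegree_finsetSum_le
  intro q _
  split
  · have hX : ∀ i : Fin n, (MvPolynomial.X (R := ℝ) i ^ 2).totalDegree ≤ 2 := fun i =>
      (MvPolynomial.totalDegree_pow _ _).trans (by simp [MvPolynomial.totalDegree_X])
    have h1 : ((MvPolynomial.X (R := ℝ) q.1 * MvPolynomial.X q.2.1 * MvPolynomial.X q.2.2.1 *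
        MvPolynomial.X q.2.2.2) ^ 2).totalDegree ≤ 8 := by
      refine (MvPolynomial.totalDegree_pow _ _).trans ?_
      have := (MvPolynomial.totalDegree_mul (MvPolynomial.X (R := ℝ) q.1 * MvPolynomial.X q.2.1 *
        MvPolynomial.X q.2.2.1) (MvPolynomial.X q.2.2.2)).trans
        (add_le_add ((MvPolynomial.totalDegree_mul _ _).trans
          (add_le_add ((MvPolynomial.totalDegree_mul _ _).trans
            (add_le_add (MvPolynomial.totalDegree_X _).le (MvPolynomial.totalDegree_X _).le))
            (MvPolynomial.totalDegree_X _).le)) (MvPolynomial.totalDegree_X _).le)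
      omega
    have h2 : ((MvPolynomial.X (R := ℝ) q.1 ^ 2 - MvPolynomial.X q.2.1 ^ 2) ^ 2).totalDegree
        ≤ 4 := by
      refine (MvPolynomial.totalDegree_pow _ _).trans ?_
      have := (MvPolynomial.totalDegree_sub (MvPolynomial.X (R := ℝ) q.1 ^ 2)
        (MvPolynomial.X q.2.1 ^ 2)).trans (max_le (hX _) (hX _))
      omega
    have h3 : ((MvPolynomial.X (R := ℝ) q.2.2.1 ^ 2 - MvPolynomial.X q.2.2.2 ^ 2) ^ 2).totalDegree
        ≤ 4 := by
      refine (MvPolynomial.totalDegree_pow _ _).trans ?_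
      have := (MvPolynomial.totalDegree_sub (MvPolynomial.X (R := ℝ) q.2.2.1 ^ 2)
        (MvPolynomial.X q.2.2.2 ^ 2)).trans (max_le (hX _) (hX _))
      omega
    have := (MvPolynomial.totalDegree_mul ((MvPolynomial.X (R := ℝ) q.1 * MvPolynomial.X q.2.1 *
        MvPolynomial.X q.2.2.1 * MvPolynomial.X q.2.2.2) ^ 2 *
        (MvPolynomial.X q.1 ^ 2 - MvPolynomial.X q.2.1 ^ 2) ^ 2)
        ((MvPolynomial.X q.2.2.1 ^ 2 - MvPolynomial.X q.2.2.2 ^ 2) ^ 2)).trans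
      (add_le_add ((MvPolynomial.totalDegree_mul _ _).trans (add_le_add h1 h2)) h3)
    omega
  · simp

lemma PP_eval (n : ℕ) (v : Fin n → ℝ) :
    MvPolynomial.eval v (PP n) = ∑ q : Fin n × Fin n × Fin n × Fin n,
      if q.1 ≠ q.2.2.1 ∧ q.1 ≠ q.2.2.2 ∧ q.2.1 ≠ q.2.2.1 ∧ q.2.1 ≠ q.2.2.2 then
        (v q.1 * v q.2.1 * v q.2.2.1 * v q.2.2.2) ^ 2 *
          (v q.1 ^ 2 - v q.2.1 ^ 2) ^ 2 * (v q.2.2.1 ^ 2 - v q.2.2.2 ^ 2) ^ 2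
      else 0 := by
  rw [PP, map_sum]
  refine Finset.sum_congr rfl fun q _ => ?_
  split <;> simp

lemma PP_eval_nonneg (n : ℕ) (v : Fin n → ℝ) : 0 ≤ MvPolynomial.eval v (PP n) := by
  rw [PP_eval]
  refine Finset.sum_nonneg fun q _ => ?_
  split
  · positivity
  · exact le_refl _

lemma cornerVec_of_ne_zero (n : ℕ) (a : ℝ) (s : ℕ) (m : Fin n) (hm : (m : ℕ) ≠ 0) :
    cornerVec n a s m = 0 ∨ cornerVec n a s m = (Real.sqrt (a ^ 2 + s))⁻¹ := by
  unfold cornerVec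
  rw [PiLp.toLp_apply, if_neg hm]
  split
  · right; rw [mul_one]
  · left; rw [mul_zero]

/-- The polynomial `PP n` vanishes on every generalized corner-vector orbit. -/
lemma PP_eval_orbit (n : ℕ) (a : ℝ) (s : ℕ) (x : EuclideanSpace ℝ (Fin n))
    (hx : x ∈ cornerOrbit n a s) : MvPolynomial.eval (fun i => x i) (PP n) = 0 := by
  rw [cornerOrbit] at hx
  obtain ⟨p, -, rfl⟩ := (@Finset.mem_image _ _ (Classical.decEq _) _ _ _).mp hx
  rw [PP_eval]
  apply Finset.sum_eq_zero
  rintro ⟨i, j, k, l⟩ -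
  split
  case isFalse => rfl
  case isTrue hq =>
    obtain ⟨hik, hil, hjk, hjl⟩ := hq
    set c : Fin n → ℝ := fun m => cornerVec n a s m with hc
    have hsq : ∀ m : Fin n,
        ((if p.2 m then (-1 : ℝ) else 1) * cornerVec n a s (p.1 m)) ^ 2 = c (p.1 m) ^ 2 := by
      intro m; split <;> ring
    simp only [PiLp.toLp_apply]
    rw [mul_pow, mul_pow, mul_pow, hsq, hsq, hsq, hsq]
    set A := p.1 i; set B := p.1 j; set C := p.1 k; set D := p.1 l
    have hAC : A ≠ C := fun h => hik (p.1.injective h)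
    have hAD : A ≠ D := fun h => hil (p.1.injective h)
    have hBC : B ≠ C := fun h => hjk (p.1.injective h)
    have hBD : B ≠ D := fun h => hjl (p.1.injective h)
    have key : c A = 0 ∨ c B = 0 ∨ c C = 0 ∨ c D = 0 ∨ c A = c B ∨ c C = c D := by
      by_cases hC0 : (C : ℕ) = 0
      · have hA0 : (A : ℕ) ≠ 0 := fun h => hAC (Fin.val_injective (h.trans hC0.symm))
        have hB0 : (B : ℕ) ≠ 0 := fun h => hBC (Fin.val_injective (h.trans hC0.symm))
        rcases cornerVec_of_ne_zero n a s A hA0 with h | h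
        · exact Or.inl h
        · rcases cornerVec_of_ne_zero n a s B hB0 with h' | h'
          · exact Or.inr (Or.inl h')
          · exact Or.inr (Or.inr (Or.inr (Or.inr (Or.inl (h.trans h'.symm)))))
      · by_cases hD0 : (D : ℕ) = 0
        · have hA0 : (A : ℕ) ≠ 0 := fun h => hAD (Fin.val_injective (h.trans hD0.symm))
          have hB0 : (B : ℕ) ≠ 0 := fun h => hBD (Fin.val_injective (h.trans hD0.symm))
          rcases cornerVec_of_ne_zero n a s A hA0 with h | h
          · exact Or.inl h
          · rcases cornerVec_of_ne_zero n a s B hB0 with h' | h'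
            · exact Or.inr (Or.inl h')
            · exact Or.inr (Or.inr (Or.inr (Or.inr (Or.inl (h.trans h'.symm)))))
        · rcases cornerVec_of_ne_zero n a s C hC0 with h | h
          · exact Or.inr (Or.inr (Or.inl h))
          · rcases cornerVec_of_ne_zero n a s D hD0 with h' | h'
            · exact Or.inr (Or.inr (Or.inr (Or.inl h')))
            · exact Or.inr (Or.inr (Or.inr (Or.inr (Or.inr (h.trans h'.symm)))))
    rcases key with h | h | h | h | h | h <;> rw [h] <;> ring

/-- A point of the unit sphere with four distinct positive coordinates. -/
noncomputable def zpt (n : ℕ) : EuclideanSpace ℝ (Fin n) :=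
  WithLp.toLp 2 (fun m => if (m : ℕ) < 4 then ((m : ℕ) + 1 : ℝ) / Real.sqrt 30 else 0)

lemma zpt_spec (n : ℕ) (hn : 4 ≤ n) : ‖zpt n‖ = 1 := by
  have h30 : (0:ℝ) < Real.sqrt 30 := Real.sqrt_pos.mpr (by norm_num)
  rw [EuclideanSpace.norm_eq]
  have : ∑ i : Fin n, ‖zpt n i‖ ^ 2 = 1 := by
    rw [← Finset.sum_subset (Finset.subset_univ
      ({⟨0, by omega⟩, ⟨1, by omega⟩, ⟨2, by omega⟩, ⟨3, by omega⟩} : Finset (Fin n)))]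
    · rw [Finset.sum_insert (by simp [Fin.ext_iff]), Finset.sum_insert (by simp [Fin.ext_iff]),
        Finset.sum_insert (by simp [Fin.ext_iff]), Finset.sum_singleton]
      have hs : |Real.sqrt 30| ^ 2 = 30 := by
        rw [sq_abs, Real.sq_sqrt (by norm_num : (0:ℝ) ≤ 30)]
      simp only [zpt]
      norm_num [Real.norm_eq_abs, abs_div, div_pow, hs]
    · intro x _ hx
      simp only [Finset.mem_insert, Finset.mem_singleton, Fin.ext_iff] at hx
      push_neg at hx
      have : ¬ ((x:ℕ) < 4) := by omega
      simp [zpt, this]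
  rw [this, Real.sqrt_one]

lemma PP_pos_at_zpt (n : ℕ) (hn : 4 ≤ n) :
    0 < MvPolynomial.eval (fun i => zpt n i) (PP n) := by
  have h30 : (0:ℝ) < Real.sqrt 30 := Real.sqrt_pos.mpr (by norm_num)
  have hs : Real.sqrt 30 ^ 2 = 30 := Real.sq_sqrt (by norm_num)
  rw [PP_eval]
  apply Finset.sum_pos'
  · intro q _
    split
    · positivity
    · exact le_refl _
  · refine ⟨(⟨0, by omega⟩, ⟨1, by omega⟩, ⟨2, by omega⟩, ⟨3, by omega⟩), Finset.mem_univ _, ?_⟩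
    rw [if_pos (by simp [Fin.ext_iff])]
    have e0 : zpt n ⟨0, by omega⟩ = 1 / Real.sqrt 30 := by norm_num [zpt]
    have e1 : zpt n ⟨1, by omega⟩ = 2 / Real.sqrt 30 := by norm_num [zpt]
    have e2 : zpt n ⟨2, by omega⟩ = 3 / Real.sqrt 30 := by norm_num [zpt]
    have e3 : zpt n ⟨3, by omega⟩ = 4 / Real.sqrt 30 := by norm_num [zpt]
    simp only [e0, e1, e2, e3]
    have d1 : (1 / Real.sqrt 30) ^ 2 - (2 / Real.sqrt 30) ^ 2 = -3 / 30 := by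
      rw [div_pow, div_pow, hs]; norm_num
    have d2 : (3 / Real.sqrt 30) ^ 2 - (4 / Real.sqrt 30) ^ 2 = -7 / 30 := by
      rw [div_pow, div_pow, hs]; norm_num
    rw [d1, d2]
    positivity

/-- A spherical cap has positive `(n-1)`-dimensional Hausdorff measure. -/
lemma cap_pos (n : ℕ) (hn : 4 ≤ n) (z : EuclideanSpace ℝ (Fin n)) (hz : ‖z‖ = 1)
    (hz0 : 0 < z ⟨0, by omega⟩) {δ : ℝ} (hδ : 0 < δ) :
    0 < μH[(n : ℝ) - 1]
      (Metric.sphere (0 : EuclideanSpace ℝ (Fin n)) 1 ∩ Metric.ball z δ) := by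
  set m := n - 1 with hm'
  have hm : m + 1 = n := by omega
  set em : Fin m → Fin n := fun j => Fin.cast hm j.succ with hem
  have hemval : ∀ j : Fin m, ((em j : Fin n) : ℕ) = (j : ℕ) + 1 := by
    intro j; simp [hem]
  set π : EuclideanSpace ℝ (Fin n) → (Fin m → ℝ) := fun x j => x (em j) with hπdef
  have hπ : LipschitzWith 1 π := by
    rw [lipschitzWith_iff_dist_le_mul]
    intro x y
    rw [NNReal.coe_one, one_mul]
    refine (dist_pi_le_iff dist_nonneg).mpr fun j => ?_
    rw [Real.dist_eq, EuclideanSpace.dist_eq]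
    calc |x (em j) - y (em j)| = Real.sqrt ((x (em j) - y (em j)) ^ 2) :=
          (Real.sqrt_sq_eq_abs _).symm
      _ ≤ Real.sqrt (∑ i, dist (x i) (y i) ^ 2) := by
          apply Real.sqrt_le_sqrt
          have h := Finset.single_le_sum (f := fun i => dist (x i) (y i) ^ 2)
            (fun i _ => sq_nonneg _) (Finset.mem_univ (em j))
          simp only [Real.dist_eq, sq_abs] at h ⊢
          exact h
  have sum_split : ∀ f : Fin n → ℝ,
      ∑ i, f i = f ⟨0, by omega⟩ + ∑ j : Fin m, f (em j) := by
    intro f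
    rw [← Equiv.sum_comp (finCongr hm) f, Fin.sum_univ_succ]
    congr 1
  set F : (Fin m → ℝ) → EuclideanSpace ℝ (Fin n) := fun u => WithLp.toLp 2 (fun i : Fin n =>
    if (i : ℕ) = 0 then Real.sqrt (1 - ∑ j, u j ^ 2)
    else u ⟨(i : ℕ) - 1, by have := i.isLt; omega⟩) with hF
  have hFem : ∀ (u : Fin m → ℝ) (j : Fin m), F u (em j) = u j := by
    intro u j
    have h1 := hemval j
    simp only [hF, PiLp.toLp_apply]
    rw [if_neg (by omega)]
    congr 1
  have hF0 : ∀ u : Fin m → ℝ, F u ⟨0, by omega⟩ = Real.sqrt (1 - ∑ j, u j ^ 2) := by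
    intro u; simp [hF]
  have hFnorm : ∀ u : Fin m → ℝ, (∑ j, u j ^ 2) ≤ 1 → ‖F u‖ = 1 := by
    intro u hu
    rw [EuclideanSpace.norm_eq]
    have : (∑ i, ‖F u i‖ ^ 2) = 1 := by
      simp only [Real.norm_eq_abs, sq_abs]
      rw [sum_split (fun i => F u i ^ 2), hF0, Real.sq_sqrt (by linarith)]
      have h2 : ∑ j : Fin m, F u (em j) ^ 2 = ∑ j, u j ^ 2 :=
        Finset.sum_congr rfl fun j _ => by rw [hFem]
      rw [h2]; ring
    rw [this, Real.sqrt_one]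
  have hzsum : z ⟨0, by omega⟩ ^ 2 + ∑ j : Fin m, z (em j) ^ 2 = 1 := by
    have h1 : ∑ i, ‖z i‖ ^ 2 = 1 := by
      have := hz
      rw [EuclideanSpace.norm_eq, Real.sqrt_eq_one] at this
      exact this
    simp only [Real.norm_eq_abs, sq_abs] at h1
    rw [sum_split (fun i => z i ^ 2)] at h1
    exact h1
  have hπz : ∑ j, π z j ^ 2 = 1 - z ⟨0, by omega⟩ ^ 2 := by
    simp only [hπdef]
    linarith
  have hπzlt : ∑ j, π z j ^ 2 < 1 := by
    rw [hπz]
    nlinarith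
  have hFz : F (π z) = z := by
    ext i
    by_cases hi : (i : ℕ) = 0
    · have hieq : i = ⟨0, by omega⟩ := Fin.ext hi
      rw [hieq, hF0, hπz, show (1 : ℝ) - (1 - z ⟨0, by omega⟩ ^ 2) = z ⟨0, by omega⟩ ^ 2 by ring,
        Real.sqrt_sq hz0.le]
    · simp only [hF, PiLp.toLp_apply, if_neg hi, hπdef]
      apply congrArg
      apply Fin.ext
      rw [hemval]
      simp only [Fin.val_mk]
      omega
  have hScont : Continuous fun u : Fin m → ℝ => ∑ j, u j ^ 2 :=
    continuous_finset_sum _ fun j _ => (continuous_apply j).pow 2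
  have hFcont : Continuous F := by
    have hG : Continuous fun (u : Fin m → ℝ) (i : Fin n) =>
        (if (i : ℕ) = 0 then Real.sqrt (1 - ∑ j, u j ^ 2)
          else u ⟨(i : ℕ) - 1, by have := i.isLt; omega⟩) := by
      apply continuous_pi
      intro i
      by_cases hi : (i : ℕ) = 0
      · simp only [hi, if_true]
        exact Real.continuous_sqrt.comp (continuous_const.sub hScont)
      · simp only [hi, if_false]
        exact continuous_apply _
    exact (EuclideanSpace.equiv (Fin n) ℝ).symm.continuous.comp hG
  have hopen : IsOpen ({u : Fin m → ℝ | ∑ j, u j ^ 2 < 1} ∩ F ⁻¹' Metric.ball z δ) :=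
    (isOpen_lt hScont continuous_const).inter (Metric.isOpen_ball.preimage hFcont)
  have hmem : π z ∈ ({u : Fin m → ℝ | ∑ j, u j ^ 2 < 1} ∩ F ⁻¹' Metric.ball z δ) :=
    ⟨hπzlt, by simp only [Set.mem_preimage, hFz]; exact Metric.mem_ball_self hδ⟩
  obtain ⟨ε, hε, hball⟩ := Metric.isOpen_iff.mp hopen (π z) hmem
  have hsub : Metric.ball (π z) ε ⊆
      π '' (Metric.sphere (0 : EuclideanSpace ℝ (Fin n)) 1 ∩ Metric.ball z δ) := by
    intro u hu
    obtain ⟨hu1, hu2⟩ := hball hu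
    refine ⟨F u, ⟨?_, hu2⟩, funext fun j => hFem u j⟩
    rw [mem_sphere_zero_iff_norm]
    exact hFnorm u hu1.le
  have hd0 : (0 : ℝ) ≤ (n : ℝ) - 1 := by
    have : (4 : ℝ) ≤ (n : ℝ) := by exact_mod_cast hn
    linarith
  have hcast : ((n : ℝ) - 1) = ((Fintype.card (Fin m) : ℕ) : ℝ) := by
    rw [Fintype.card_fin]
    have : ((m : ℕ) : ℝ) + 1 = (n : ℝ) := by exact_mod_cast hm
    linarith
  have hvol : 0 < μH[(n : ℝ) - 1] (Metric.ball (π z) ε : Set (Fin m → ℝ)) := by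
    rw [hcast, hausdorffMeasure_pi_real]
    exact Metric.measure_ball_pos _ _ hε
  have himg := hπ.hausdorffMeasure_image_le hd0
    (Metric.sphere (0 : EuclideanSpace ℝ (Fin n)) 1 ∩ Metric.ball z δ)
  have hchain : (0 : ℝ≥0∞) < μH[(n : ℝ) - 1]
      (π '' (Metric.sphere (0 : EuclideanSpace ℝ (Fin n)) 1 ∩ Metric.ball z δ)) :=
    lt_of_lt_of_le hvol (measure_mono hsub)
  calc (0 : ℝ≥0∞) < _ := hchain
    _ ≤ (1 : ℝ≥0) ^ ((n : ℝ) - 1) *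
        μH[(n : ℝ) - 1] (Metric.sphere (0 : EuclideanSpace ℝ (Fin n)) 1 ∩ Metric.ball z δ) :=
      himg
    _ = _ := by
      rw [ENNReal.coe_one, ENNReal.one_rpow, one_mul]

/-- If some orbit has `s_i ≥ 3`, the degree is at most 15. -/
theorem degree_bound_of_exists_large_s (n t k : ℕ) (hn : 4 ≤ n) (hk : 1 ≤ k)
    (a : Fin k → ℝ) (s : Fin k → ℕ) (W : Fin k → ℝ)
    (ha : ∀ i, 0 < a i) (hs : ∀ i, s i ≤ n - 1) (hW : ∀ i, 0 < W i)
    (hbig : ∃ i, 3 ≤ s i)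
    (hd : isDesign n t k a s W) :
    t ≤ 15 := by
  by_contra hcon
  push_neg at hcon
  have hgcont : Continuous fun x : EuclideanSpace ℝ (Fin n) =>
      MvPolynomial.eval (fun i => x i) (PP n) := by
    have h1 : Continuous fun v : Fin n → ℝ => MvPolynomial.eval v (PP n) :=
      MvPolynomial.continuous_eval (PP n)
    have h2 : Continuous fun x : EuclideanSpace ℝ (Fin n) => (fun i => x i : Fin n → ℝ) :=
      (EuclideanSpace.equiv (Fin n) ℝ).continuous
    exact h1.comp h2
  have hz1 : ‖zpt n‖ = 1 := zpt_spec n hn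
  have hzS : zpt n ∈ Metric.sphere (0 : EuclideanSpace ℝ (Fin n)) 1 :=
    mem_sphere_zero_iff_norm.mpr hz1
  have hzpos : 0 < MvPolynomial.eval (fun i => zpt n i) (PP n) := PP_pos_at_zpt n hn
  obtain ⟨δ, hδ, hball⟩ := Metric.isOpen_iff.mp
    (isOpen_lt continuous_const hgcont) (zpt n) hzpos
  have hz0 : 0 < zpt n ⟨0, by omega⟩ := by
    have h30 : (0:ℝ) < Real.sqrt 30 := Real.sqrt_pos.mpr (by norm_num)
    have : zpt n ⟨0, by omega⟩ = 1 / Real.sqrt 30 := by norm_num [zpt]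
    rw [this]; positivity
  have hT : 0 < μH[(n : ℝ) - 1]
      (Metric.sphere (0 : EuclideanSpace ℝ (Fin n)) 1 ∩ Metric.ball (zpt n) δ) :=
    cap_pos n hn (zpt n) hz1 hz0 hδ
  have hμS : 0 < μH[(n : ℝ) - 1] (Metric.sphere (0 : EuclideanSpace ℝ (Fin n)) 1) :=
    lt_of_lt_of_le hT (measure_mono Set.inter_subset_left)
  have horb : ∀ i : Fin k, orbitSum n (a i) (s i) (PP n) = 0 := fun i =>
    Finset.sum_eq_zero fun y hy => PP_eval_orbit n (a i) (s i) y hy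
  rcases eq_or_ne (μH[(n : ℝ) - 1] (Metric.sphere (0 : EuclideanSpace ℝ (Fin n)) 1)) ⊤
    with htop | htop
  · -- infinite surface measure : contradiction with the constant polynomial 1
    have h1 := hd 1 (by rw [MvPolynomial.totalDegree_one]; omega)
    rw [sphereAvg] at h1
    simp only [map_one] at h1
    rw [setAverage_eq, measureReal_def, htop, ENNReal.toReal_top, inv_zero, zero_smul] at h1
    have hpos : 0 < ∑ i, W i * orbitSum n (a i) (s i) 1 := by
      apply Finset.sum_pos
      · intro i _
        apply mul_pos (hW i)
        rw [orbitSum]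
        simp only [map_one]
        rw [Finset.sum_const, nsmul_eq_mul, mul_one]
        have hne : (cornerOrbit n (a i) (s i)).Nonempty := by
          rw [cornerOrbit]
          letI := Classical.decEq (EuclideanSpace ℝ (Fin n))
          exact Finset.Nonempty.image Finset.univ_nonempty _
        exact_mod_cast Finset.card_pos.mpr hne
      · exact Finset.univ_nonempty_iff.mpr ⟨⟨0, hk⟩⟩
    rw [← h1] at hpos
    exact lt_irrefl 0 hpos
  · -- finite surface measure : contradiction with the polynomial `PP n`
    have hP := hd (PP n) (le_trans (PP_deg n) (by omega))
    rw [sphereAvg, setAverage_eq, measureReal_def] at hP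
    have hRHS : ∑ i, W i * orbitSum n (a i) (s i) (PP n) = 0 :=
      Finset.sum_eq_zero fun i _ => by rw [horb i, mul_zero]
    rw [hRHS] at hP
    haveI : IsFiniteMeasure ((μH[(n : ℝ) - 1] : Measure (EuclideanSpace ℝ (Fin n))).restrict
        (Metric.sphere (0 : EuclideanSpace ℝ (Fin n)) 1)) :=
      ⟨by rwa [Measure.restrict_apply_univ, lt_top_iff_ne_top]⟩
    have hSmeas : MeasurableSet (Metric.sphere (0 : EuclideanSpace ℝ (Fin n)) 1) :=
      Metric.isClosed_sphere.measurableSet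
    obtain ⟨x₀, hx₀S, hx₀⟩ := (isCompact_sphere (0 : EuclideanSpace ℝ (Fin n)) 1).exists_isMaxOn
      ⟨zpt n, hzS⟩ hgcont.continuousOn
    have hint : IntegrableOn (fun x : EuclideanSpace ℝ (Fin n) =>
        MvPolynomial.eval (fun i => x i) (PP n))
        (Metric.sphere (0 : EuclideanSpace ℝ (Fin n)) 1) μH[(n : ℝ) - 1] := by
      apply Integrable.mono' (integrable_const (MvPolynomial.eval (fun i => x₀ i) (PP n)))
        hgcont.aestronglyMeasurable
      refine (ae_restrict_iff' hSmeas).mpr (ae_of_all _ fun x hx => ?_)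
      rw [Real.norm_eq_abs, abs_of_nonneg (PP_eval_nonneg n _)]
      exact hx₀ hx
    have hIpos : 0 < ∫ x in Metric.sphere (0 : EuclideanSpace ℝ (Fin n)) 1,
        MvPolynomial.eval (fun i => x i) (PP n) ∂μH[(n : ℝ) - 1] := by
      rw [setIntegral_pos_iff_support_of_nonneg_ae
        (ae_of_all _ fun x => PP_eval_nonneg n _) hint]
      refine lt_of_lt_of_le hT (measure_mono ?_)
      rintro x ⟨hx1, hx2⟩
      exact ⟨ne_of_gt (hball hx2), hx1⟩
    have hLpos : 0 < (μH[(n : ℝ) - 1]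
          (Metric.sphere (0 : EuclideanSpace ℝ (Fin n)) 1)).toReal⁻¹ •
        ∫ x in Metric.sphere (0 : EuclideanSpace ℝ (Fin n)) 1,
          MvPolynomial.eval (fun i => x i) (PP n) ∂μH[(n : ℝ) - 1] := by
      rw [smul_eq_mul]
      exact mul_pos (inv_pos.mpr (ENNReal.toReal_pos hμS.ne' htop)) hIpos
    rw [hP] at hLpos
    exact lt_irrefl 0 hLpos
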